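/- Fix reals α > 0 and σ > 0. Let π : ℝ → [0,∞) be differentiable with ∫ π(x_0) dx_0 = 1, ∫ |x_0| · π(x_0) dx_0 < ∞, π′ Lebesgue-integrable, and π(x_0) → 0 as x_0 → ±∞. Define p(x) := ∫ π(x_0) · N(x; α·x_0, σ²) dx_0. Then p is differentiable and satisfies the mixed score identity (α² + σ²) · p′(x) = ∫ ( α · (x_0 · π(x_0) + π′(x_0)) − x · π(x_0) ) · N(x; α·x_0, σ²) dx_0 for every x ∈ ℝ; equivalently, the score ∇ log p(x) equals 1/(α² + σ²) times the posterior expectation of α·(x_0 + ∇ log π(x_0)) − x under the denoising posterior p(x_0 | x) ∝ π(x_0)·N(x; α·x_0, σ²). -/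

import Mathlib

open Real MeasureTheory Filter

/-- The one-dimensional Gaussian density with mean `m` and variance `v`:
`N(x; m, v) = (2 π v)^(-1/2) · exp(-(x - m)² / (2 v))`. -/
noncomputable def gaussDensity1 (v m x : ℝ) : ℝ :=
  (2 * Real.pi * v) ^ (-(1 : ℝ) / 2) * Real.exp (-(x - m) ^ 2 / (2 * v))


lemma msi_exp_bound {σ : ℝ} (hσ : 0 < σ) (t : ℝ) :
    |t| * Real.exp (-t ^ 2 / (2 * σ ^ 2)) ≤ σ := by
  rw [← sq_abs t]
  have habs : 0 ≤ |t| := abs_nonneg t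
  set a := |t| with ha
  clear_value a
  have h1 : a ^ 2 / (2 * σ ^ 2) + 1 ≤ Real.exp (a ^ 2 / (2 * σ ^ 2)) :=
    Real.add_one_le_exp _
  have hu : a ≤ σ + a ^ 2 / (2 * σ) := by
    rw [← sub_nonneg]
    have he : σ + a ^ 2 / (2 * σ) - a = (σ ^ 2 + (σ - a) ^ 2) / (2 * σ) := by
      field_simp; ring
    rw [he]; positivity
  have he2 : σ * (a ^ 2 / (2 * σ ^ 2) + 1) = a ^ 2 / (2 * σ) + σ := by
    field_simp
  have h2 : a ≤ σ * Real.exp (a ^ 2 / (2 * σ ^ 2)) := by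
    have := mul_le_mul_of_nonneg_left h1 hσ.le
    linarith
  have h3 : Real.exp (-a ^ 2 / (2 * σ ^ 2)) = (Real.exp (a ^ 2 / (2 * σ ^ 2)))⁻¹ := by
    rw [← Real.exp_neg]; ring_nf
  rw [h3, mul_inv_le_iff₀ (Real.exp_pos _)]
  linarith

lemma msi_c_pos {s : ℝ} (hs : 0 < s) : (0:ℝ) < (2 * Real.pi * s) ^ (-(1 : ℝ) / 2) := by
  apply Real.rpow_pos_of_pos
  have := Real.pi_pos
  nlinarith

lemma gauss_hasDerivAt_x (s m : ℝ) (hs : s ≠ 0) (x : ℝ) :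
    HasDerivAt (fun y => gaussDensity1 s m y) ((m - x) / s * gaussDensity1 s m x) x := by
  have h : HasDerivAt (fun y : ℝ => y - m) 1 x := (hasDerivAt_id x).sub_const m
  have h1 : HasDerivAt (fun y : ℝ => -(y - m) ^ 2 / (2 * s)) ((m - x) / s) x := by
    have h2 := (h.pow 2).neg.div_const (2 * s)
    refine h2.congr_deriv ?_
    field_simp
    ring
  have h3 := (h1.exp).const_mul ((2 * Real.pi * s) ^ (-(1 : ℝ) / 2))
  refine h3.congr_deriv ?_
  unfold gaussDensity1
  ring

lemma gauss_hasDerivAt_m (s x : ℝ) (hs : s ≠ 0) (m : ℝ) :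
    HasDerivAt (fun m => gaussDensity1 s m x) ((x - m) / s * gaussDensity1 s m x) m := by
  have h : HasDerivAt (fun m : ℝ => x - m) (-1) m := (hasDerivAt_id m).const_sub x
  have h1 : HasDerivAt (fun m : ℝ => -(x - m) ^ 2 / (2 * s)) ((x - m) / s) m := by
    have h2 := (h.pow 2).neg.div_const (2 * s)
    refine h2.congr_deriv ?_
    field_simp
    ring
  have h3 := (h1.exp).const_mul ((2 * Real.pi * s) ^ (-(1 : ℝ) / 2))
  refine h3.congr_deriv ?_
  unfold gaussDensity1
  ring

lemma gauss_nonneg {s : ℝ} (hs : 0 < s) (m x : ℝ) : 0 ≤ gaussDensity1 s m x := by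
  unfold gaussDensity1
  exact mul_nonneg (msi_c_pos hs).le (Real.exp_pos _).le

lemma gauss_le {s : ℝ} (hs : 0 < s) (m x : ℝ) :
    gaussDensity1 s m x ≤ (2 * Real.pi * s) ^ (-(1 : ℝ) / 2) := by
  unfold gaussDensity1
  have h1 : Real.exp (-(x - m) ^ 2 / (2 * s)) ≤ 1 := by
    rw [Real.exp_le_one_iff]
    have h2 : 0 ≤ (x - m) ^ 2 := sq_nonneg _
    apply div_nonpos_of_nonpos_of_nonneg <;> nlinarith
  nlinarith [msi_c_pos hs]

lemma gauss_deriv_bound {σ : ℝ} (hσ : 0 < σ) (m x : ℝ) :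
    |x - m| * gaussDensity1 (σ ^ 2) m x ≤ (2 * Real.pi * σ ^ 2) ^ (-(1 : ℝ) / 2) * σ := by
  unfold gaussDensity1
  have h := msi_exp_bound hσ (x - m)
  have hc := msi_c_pos (s := σ ^ 2) (by positivity)
  calc |x - m| * ((2 * Real.pi * σ ^ 2) ^ (-(1 : ℝ) / 2) * Real.exp (-(x - m) ^ 2 / (2 * σ ^ 2)))
      = (2 * Real.pi * σ ^ 2) ^ (-(1 : ℝ) / 2) * (|x - m| * Real.exp (-(x - m) ^ 2 / (2 * σ ^ 2))) := by ring
    _ ≤ (2 * Real.pi * σ ^ 2) ^ (-(1 : ℝ) / 2) * σ := mul_le_mul_of_nonneg_left h hc.le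

lemma gauss_continuous (s a : ℝ) (x : ℝ) :
    Continuous (fun x₀ : ℝ => gaussDensity1 s (a * x₀) x) := by
  unfold gaussDensity1
  fun_prop

/-- **Mixed score identity (one-dimensional).**
If `π` is a differentiable probability density on `ℝ` with finite first moment, integrable
derivative, and `π(x_0) → 0` as `x_0 → ±∞`, then `p(x) = ∫ π(x_0)·N(x; α·x_0, σ²) dx_0` is
differentiable and satisfies
`(α² + σ²)·p′(x) = ∫ (α·(x_0·π(x_0) + π′(x_0)) − x·π(x_0))·N(x; α·x_0, σ²) dx_0`. -/
theorem mixed_score_identity (α σ : ℝ) (hα : 0 < α) (hσ : 0 < σ)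
    (pdens : ℝ → ℝ) (hπ_nonneg : ∀ x, 0 ≤ pdens x) (hπ_diff : Differentiable ℝ pdens)
    (hπ_norm : ∫ x₀, pdens x₀ = 1)
    (hπ_mom : Integrable (fun x₀ => |x₀| * pdens x₀))
    (hπ'_int : Integrable (deriv pdens))
    (hπ_top : Tendsto pdens atTop (nhds 0))
    (hπ_bot : Tendsto pdens atBot (nhds 0)) :
    Differentiable ℝ (fun x => ∫ x₀, pdens x₀ * gaussDensity1 (σ ^ 2) (α * x₀) x) ∧
    ∀ x, (α ^ 2 + σ ^ 2) *
        deriv (fun x => ∫ x₀, pdens x₀ * gaussDensity1 (σ ^ 2) (α * x₀) x) x =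
      ∫ x₀, (α * (x₀ * pdens x₀ + deriv pdens x₀) - x * pdens x₀) *
        gaussDensity1 (σ ^ 2) (α * x₀) x := by
  have hspos : (0 : ℝ) < σ ^ 2 := by positivity
  have hs : (σ ^ 2 : ℝ) ≠ 0 := hspos.ne'
  set c : ℝ := (2 * Real.pi * σ ^ 2) ^ (-(1 : ℝ) / 2) with hc_def
  have hc : 0 < c := msi_c_pos hspos
  have hπ_int : Integrable pdens := by
    by_contra h
    rw [integral_undef h] at hπ_norm
    norm_num at hπ_norm
  have hπ_cont : Continuous pdens := hπ_diff.continuous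
  -- integrability of the basic integrands
  have int0 : ∀ x : ℝ, Integrable (fun x₀ => pdens x₀ * gaussDensity1 (σ ^ 2) (α * x₀) x) := by
    intro x
    apply Integrable.mono' (hπ_int.const_mul c)
    · exact (hπ_cont.mul (gauss_continuous (σ ^ 2) α x)).aestronglyMeasurable
    · filter_upwards with x₀
      rw [Real.norm_eq_abs, abs_mul, abs_of_nonneg (hπ_nonneg x₀),
        abs_of_nonneg (gauss_nonneg hspos _ _)]
      calc pdens x₀ * gaussDensity1 (σ ^ 2) (α * x₀) x
          ≤ pdens x₀ * c := mul_le_mul_of_nonneg_left (gauss_le hspos _ _) (hπ_nonneg x₀)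
        _ = c * pdens x₀ := mul_comm _ _
  have int1 : ∀ x : ℝ, Integrable (fun x₀ => x₀ * pdens x₀ * gaussDensity1 (σ ^ 2) (α * x₀) x) := by
    intro x
    apply Integrable.mono' (hπ_mom.const_mul c)
    · exact ((continuous_id.mul hπ_cont).mul (gauss_continuous (σ ^ 2) α x)).aestronglyMeasurable
    · filter_upwards with x₀
      rw [Real.norm_eq_abs, abs_mul, abs_mul, abs_of_nonneg (hπ_nonneg x₀),
        abs_of_nonneg (gauss_nonneg hspos _ _)]
      calc |x₀| * pdens x₀ * gaussDensity1 (σ ^ 2) (α * x₀) x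
          ≤ |x₀| * pdens x₀ * c := by
            apply mul_le_mul_of_nonneg_left (gauss_le hspos _ _)
            exact mul_nonneg (abs_nonneg _) (hπ_nonneg x₀)
        _ = c * (|x₀| * pdens x₀) := by ring
  have int2 : ∀ x : ℝ, Integrable (fun x₀ => deriv pdens x₀ * gaussDensity1 (σ ^ 2) (α * x₀) x) := by
    intro x
    apply Integrable.mono' (hπ'_int.abs.const_mul c)
    · exact (hπ'_int.aestronglyMeasurable.mul (gauss_continuous (σ ^ 2) α x).aestronglyMeasurable)
    · filter_upwards with x₀
      rw [Real.norm_eq_abs, abs_mul, abs_of_nonneg (gauss_nonneg hspos _ _)]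
      calc |deriv pdens x₀| * gaussDensity1 (σ ^ 2) (α * x₀) x
          ≤ |deriv pdens x₀| * c := mul_le_mul_of_nonneg_left (gauss_le hspos _ _) (abs_nonneg _)
        _ = c * |deriv pdens x₀| := mul_comm _ _
  -- uniform bound for the x-derivative of the integrand
  have keybound : ∀ (y x₀ : ℝ),
      ‖pdens x₀ * ((α * x₀ - y) / σ ^ 2 * gaussDensity1 (σ ^ 2) (α * x₀) y)‖
        ≤ c / σ * pdens x₀ := by
    intro y x₀
    have hg := gauss_deriv_bound hσ (α * x₀) y
    have hgn := gauss_nonneg hspos (α * x₀) y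
    rw [Real.norm_eq_abs, abs_mul, abs_of_nonneg (hπ_nonneg x₀), abs_mul, abs_div,
      abs_of_pos hspos, abs_of_nonneg hgn]
    have key : |α * x₀ - y| / σ ^ 2 * gaussDensity1 (σ ^ 2) (α * x₀) y ≤ c / σ := by
      rw [abs_sub_comm, div_mul_eq_mul_div, div_le_div_iff₀ hspos hσ]
      nlinarith [mul_le_mul_of_nonneg_right hg hσ.le]
    calc pdens x₀ * (|α * x₀ - y| / σ ^ 2 * gaussDensity1 (σ ^ 2) (α * x₀) y)
        ≤ pdens x₀ * (c / σ) := mul_le_mul_of_nonneg_left key (hπ_nonneg x₀)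
      _ = c / σ * pdens x₀ := mul_comm _ _
  have intD : ∀ x : ℝ, Integrable
      (fun x₀ => pdens x₀ * ((α * x₀ - x) / σ ^ 2 * gaussDensity1 (σ ^ 2) (α * x₀) x)) := by
    intro x
    apply Integrable.mono' (hπ_int.const_mul (c / σ))
    · apply Continuous.aestronglyMeasurable
      exact hπ_cont.mul ((by fun_prop : Continuous fun x₀ : ℝ => (α * x₀ - x) / σ ^ 2).mul
        (gauss_continuous (σ ^ 2) α x))
    · filter_upwards with x₀
      exact keybound x x₀
  -- differentiation under the integral sign
  have hderiv : ∀ x : ℝ,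
      HasDerivAt (fun x => ∫ x₀, pdens x₀ * gaussDensity1 (σ ^ 2) (α * x₀) x)
        (∫ x₀, pdens x₀ * ((α * x₀ - x) / σ ^ 2 * gaussDensity1 (σ ^ 2) (α * x₀) x)) x := by
    intro x
    have H := hasDerivAt_integral_of_dominated_loc_of_deriv_le (μ := volume)
      (F := fun x x₀ => pdens x₀ * gaussDensity1 (σ ^ 2) (α * x₀) x)
      (F' := fun x x₀ => pdens x₀ * ((α * x₀ - x) / σ ^ 2 * gaussDensity1 (σ ^ 2) (α * x₀) x))
      (x₀ := x) (bound := fun x₀ => c / σ * pdens x₀) (Metric.ball_mem_nhds x one_pos)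
      (Filter.Eventually.of_forall fun y => (int0 y).aestronglyMeasurable)
      (int0 x) (intD x).aestronglyMeasurable
      (Filter.Eventually.of_forall fun x₀ y _ => keybound y x₀)
      (hπ_int.const_mul _)
      (Filter.Eventually.of_forall fun x₀ y _ =>
        (gauss_hasDerivAt_x (σ ^ 2) (α * x₀) hs y).const_mul (pdens x₀))
    exact H.2
  have hDiff : Differentiable ℝ (fun x => ∫ x₀, pdens x₀ * gaussDensity1 (σ ^ 2) (α * x₀) x) :=
    fun x => (hderiv x).differentiableAt
  refine ⟨hDiff, fun x => ?_⟩
  have hD : deriv (fun x => ∫ x₀, pdens x₀ * gaussDensity1 (σ ^ 2) (α * x₀) x) x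
      = ∫ x₀, pdens x₀ * ((α * x₀ - x) / σ ^ 2 * gaussDensity1 (σ ^ 2) (α * x₀) x) :=
    (hderiv x).deriv
  -- the second term of the product rule, rewritten
  have heq : (fun x₀ => pdens x₀ * (α * ((x - α * x₀) / σ ^ 2 * gaussDensity1 (σ ^ 2) (α * x₀) x)))
      = fun x₀ => -α * (pdens x₀ * ((α * x₀ - x) / σ ^ 2 * gaussDensity1 (σ ^ 2) (α * x₀) x)) := by
    funext x₀; ring
  have intD2 : Integrable
      (fun x₀ => pdens x₀ * (α * ((x - α * x₀) / σ ^ 2 * gaussDensity1 (σ ^ 2) (α * x₀) x))) := by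
    rw [heq]; exact (intD x).const_mul (-α)
  -- integration by parts (FTC on ℝ with vanishing boundary terms)
  have hd : ∀ x₀ : ℝ, HasDerivAt (fun x₀ => pdens x₀ * gaussDensity1 (σ ^ 2) (α * x₀) x)
      (deriv pdens x₀ * gaussDensity1 (σ ^ 2) (α * x₀) x
        + pdens x₀ * (α * ((x - α * x₀) / σ ^ 2 * gaussDensity1 (σ ^ 2) (α * x₀) x))) x₀ := by
    intro x₀
    have hG : HasDerivAt (fun x₀ : ℝ => gaussDensity1 (σ ^ 2) (α * x₀) x)
        (α * ((x - α * x₀) / σ ^ 2 * gaussDensity1 (σ ^ 2) (α * x₀) x)) x₀ := by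
      have hm := gauss_hasDerivAt_m (σ ^ 2) x hs (α * x₀)
      have hlin : HasDerivAt (fun x₀ : ℝ => α * x₀) α x₀ := by
        simpa using (hasDerivAt_id x₀).const_mul α
      have h3 := hm.comp x₀ hlin
      refine h3.congr_deriv ?_
      ring
    exact (hπ_diff x₀).hasDerivAt.mul hG
  have htt : Tendsto (fun x₀ => pdens x₀ * gaussDensity1 (σ ^ 2) (α * x₀) x) atTop (nhds 0) := by
    apply squeeze_zero (g := fun x₀ => c * pdens x₀)
    · intro t; exact mul_nonneg (hπ_nonneg t) (gauss_nonneg hspos _ _)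
    · intro t
      calc pdens t * gaussDensity1 (σ ^ 2) (α * t) x
          ≤ pdens t * c := mul_le_mul_of_nonneg_left (gauss_le hspos _ _) (hπ_nonneg t)
        _ = c * pdens t := mul_comm _ _
    · simpa using hπ_top.const_mul c
  have htb : Tendsto (fun x₀ => pdens x₀ * gaussDensity1 (σ ^ 2) (α * x₀) x) atBot (nhds 0) := by
    apply squeeze_zero (g := fun x₀ => c * pdens x₀)
    · intro t; exact mul_nonneg (hπ_nonneg t) (gauss_nonneg hspos _ _)
    · intro t
      calc pdens t * gaussDensity1 (σ ^ 2) (α * t) x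
          ≤ pdens t * c := mul_le_mul_of_nonneg_left (gauss_le hspos _ _) (hπ_nonneg t)
        _ = c * pdens t := mul_comm _ _
    · simpa using hπ_bot.const_mul c
  have hibp : (∫ x₀, (deriv pdens x₀ * gaussDensity1 (σ ^ 2) (α * x₀) x
      + pdens x₀ * (α * ((x - α * x₀) / σ ^ 2 * gaussDensity1 (σ ^ 2) (α * x₀) x)))) = 0 := by
    have := integral_of_hasDerivAt_of_tendsto hd ((int2 x).add intD2) htb htt
    simpa using this
  rw [integral_add (int2 x) intD2] at hibp
  have h4 : (∫ x₀, pdens x₀ * (α * ((x - α * x₀) / σ ^ 2 * gaussDensity1 (σ ^ 2) (α * x₀) x)))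
      = -α * ∫ x₀, pdens x₀ * ((α * x₀ - x) / σ ^ 2 * gaussDensity1 (σ ^ 2) (α * x₀) x) := by
    rw [heq, integral_const_mul]
  rw [h4] at hibp
  -- relate the "denoising" integral to the derivative integral
  have hint_eq : (fun x₀ => α * (x₀ * pdens x₀ * gaussDensity1 (σ ^ 2) (α * x₀) x)
        - x * (pdens x₀ * gaussDensity1 (σ ^ 2) (α * x₀) x))
      = fun x₀ => σ ^ 2 * (pdens x₀ * ((α * x₀ - x) / σ ^ 2 * gaussDensity1 (σ ^ 2) (α * x₀) x)) := by
    funext x₀; field_simp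
  have hA : Integrable (fun x₀ => α * (x₀ * pdens x₀ * gaussDensity1 (σ ^ 2) (α * x₀) x)) :=
    (int1 x).const_mul α
  have hB : Integrable (fun x₀ => α * (deriv pdens x₀ * gaussDensity1 (σ ^ 2) (α * x₀) x)) :=
    (int2 x).const_mul α
  have hC : Integrable (fun x₀ => x * (pdens x₀ * gaussDensity1 (σ ^ 2) (α * x₀) x)) :=
    (int0 x).const_mul x
  have hAB : Integrable (fun x₀ => α * (x₀ * pdens x₀ * gaussDensity1 (σ ^ 2) (α * x₀) x)
      + α * (deriv pdens x₀ * gaussDensity1 (σ ^ 2) (α * x₀) x)) := hA.add hB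
  have hsd : α * (∫ x₀, x₀ * pdens x₀ * gaussDensity1 (σ ^ 2) (α * x₀) x)
      - x * (∫ x₀, pdens x₀ * gaussDensity1 (σ ^ 2) (α * x₀) x)
      = σ ^ 2 * ∫ x₀, pdens x₀ * ((α * x₀ - x) / σ ^ 2 * gaussDensity1 (σ ^ 2) (α * x₀) x) := by
    rw [← integral_const_mul α, ← integral_const_mul x, ← integral_const_mul (σ ^ 2),
      ← integral_sub hA hC]
    exact congrArg _ hint_eq
  -- split the right-hand side
  have hsplit : (fun x₀ => (α * (x₀ * pdens x₀ + deriv pdens x₀) - x * pdens x₀)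
        * gaussDensity1 (σ ^ 2) (α * x₀) x)
      = fun x₀ => (α * (x₀ * pdens x₀ * gaussDensity1 (σ ^ 2) (α * x₀) x)
          + α * (deriv pdens x₀ * gaussDensity1 (σ ^ 2) (α * x₀) x))
        - x * (pdens x₀ * gaussDensity1 (σ ^ 2) (α * x₀) x) := by
    funext x₀; ring
  rw [hsplit, integral_sub hAB hC, integral_add hA hB, integral_const_mul, integral_const_mul,
    integral_const_mul, hD]
  set D := ∫ x₀, pdens x₀ * ((α * x₀ - x) / σ ^ 2 * gaussDensity1 (σ ^ 2) (α * x₀) x)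
  set I1 := ∫ x₀, x₀ * pdens x₀ * gaussDensity1 (σ ^ 2) (α * x₀) x
  set I2 := ∫ x₀, deriv pdens x₀ * gaussDensity1 (σ ^ 2) (α * x₀) x
  set I0 := ∫ x₀, pdens x₀ * gaussDensity1 (σ ^ 2) (α * x₀) x
  linear_combination -hsd - α * hibp
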